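/- Let I ⊆ ℝ be an open interval containing 0 and let θ : I → ℝ be a C² function with θ(0) = 0 and θ'(0) = 0. Then, as t → 0, ∫₀ᵗ cos(θ(s)) ds = t − (θ''(0)²/40)·t⁵ + o(t⁵). -/

import Mathlib

open Set Filter Topology Asymptotics

private lemma integ_littleO {g : ℝ → ℝ} {n : ℕ}
    (h : g =o[𝓝 0] fun s : ℝ => s ^ n) :
    (fun t : ℝ => ∫ s in (0:ℝ)..t, g s) =o[𝓝 0] fun t : ℝ => t ^ (n + 1) := by
  rw [isLittleO_iff]
  intro ε hε
  have h' := (isLittleO_iff.mp h) hε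
  rw [Metric.eventually_nhds_iff] at h' ⊢
  obtain ⟨δ, hδ, hbd⟩ := h'
  refine ⟨δ, hδ, fun t ht => ?_⟩
  have htδ : |t| < δ := by simpa [Real.dist_eq] using ht
  have key : ∀ s ∈ Set.uIoc (0:ℝ) t, ‖g s‖ ≤ ε * |t| ^ n := by
    intro s hs
    have hs' : |s| ≤ |t| := by
      rw [Set.mem_uIoc] at hs
      rcases hs with ⟨h1, h2⟩ | ⟨h1, h2⟩ <;> rw [abs_le] <;>
        constructor <;> nlinarith [le_abs_self t, neg_abs_le t]
    have hds : dist s 0 < δ := by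
      rw [Real.dist_eq, sub_zero]; exact lt_of_le_of_lt hs' htδ
    calc ‖g s‖ ≤ ε * ‖s ^ n‖ := hbd hds
      _ ≤ ε * |t| ^ n := by
          rw [Real.norm_eq_abs, abs_pow]
          exact mul_le_mul_of_nonneg_left (pow_le_pow_left₀ (abs_nonneg s) hs' n) hε.le
  calc ‖∫ s in (0:ℝ)..t, g s‖ ≤ (ε * |t| ^ n) * |t - 0| :=
        intervalIntegral.norm_integral_le_of_norm_le_const key
    _ = ε * ‖t ^ (n + 1)‖ := by
        rw [sub_zero, Real.norm_eq_abs, abs_pow]; ring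

/-- If `θ` is `C²` on an open interval around `0` with `θ(0) = 0` and `θ'(0) = 0`,
then `∫₀ᵗ cos(θ(s)) ds = t - (θ''(0)²/40)·t⁵ + o(t⁵)` as `t → 0`. -/
theorem stmt_4 (a b : ℝ) (ha : a < 0) (hb : 0 < b) (θ : ℝ → ℝ)
    (hθ : ContDiffOn ℝ 2 θ (Ioo a b)) (h0 : θ 0 = 0) (h1 : deriv θ 0 = 0) :
    (fun t : ℝ => (∫ s in (0:ℝ)..t, Real.cos (θ s)) -
        (t - (deriv (deriv θ) 0) ^ 2 / 40 * t ^ 5)) =o[𝓝 0] (fun t : ℝ => t ^ 5) := by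
  set c := deriv (deriv θ) 0 with hc
  have hIoo : IsOpen (Ioo a b) := isOpen_Ioo
  have h0mem : (0:ℝ) ∈ Ioo a b := ⟨ha, hb⟩
  have hnhds : Ioo a b ∈ 𝓝 (0:ℝ) := hIoo.mem_nhds h0mem
  have hθ' : ContDiffOn ℝ 1 (deriv θ) (Ioo a b) :=
    hθ.deriv_of_isOpen hIoo (by norm_num)
  have hθ'cont : ContinuousOn (deriv θ) (Ioo a b) := hθ'.continuousOn
  have hθcont : ContinuousOn θ (Ioo a b) := hθ.continuousOn
  -- second derivative
  have hd2 : HasDerivAt (deriv θ) c 0 := by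
    have hd := (hθ'.differentiableOn (by norm_num)).differentiableAt hnhds
    exact hd.hasDerivAt
  -- deriv θ s - c * s = o(s)
  have hA : (fun s : ℝ => deriv θ s - c * s) =o[𝓝 0] fun s : ℝ => s ^ 1 := by
    have h2 := hasDerivAt_iff_isLittleO.mp hd2
    simp only [sub_zero, h1, smul_eq_mul] at h2
    refine h2.congr (fun s => by ring) (fun s => by ring)
  -- subset fact
  have hsub : ∀ t ∈ Ioo a b, uIcc (0:ℝ) t ⊆ Ioo a b := fun t ht =>
    (Set.ordConnected_Ioo).uIcc_subset h0mem ht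
  -- θ t - c/2 t² = o(t²)
  have hB : (fun t : ℝ => θ t - c / 2 * t ^ 2) =o[𝓝 0] fun t : ℝ => t ^ 2 := by
    have hI := integ_littleO hA
    refine IsLittleO.congr' (hI.congr_left fun s => rfl) ?_ EventuallyEq.rfl
    filter_upwards [hnhds] with t ht
    have hsubt := hsub t ht
    have hderiv : ∀ x ∈ uIcc (0:ℝ) t, HasDerivAt θ (deriv θ x) x := fun x hx =>
      ((hθ.differentiableOn (by norm_num)).differentiableAt
        (hIoo.mem_nhds (hsubt hx))).hasDerivAt
    have hint1 : IntervalIntegrable (deriv θ) MeasureTheory.volume 0 t :=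
      (hθ'cont.mono hsubt).intervalIntegrable
    have hint2 : IntervalIntegrable (fun s : ℝ => c * s) MeasureTheory.volume 0 t :=
      (continuous_const.mul continuous_id).intervalIntegrable _ _
    have hftc : ∫ s in (0:ℝ)..t, deriv θ s = θ t - θ 0 :=
      intervalIntegral.integral_eq_sub_of_hasDerivAt hderiv hint1
    rw [intervalIntegral.integral_sub hint1 hint2, hftc, h0, sub_zero,
      intervalIntegral.integral_const_mul, integral_id]
    ring
  -- θ = O(s²)
  have hO2 : (fun s : ℝ => θ s) =O[𝓝 0] fun s : ℝ => s ^ 2 := by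
    have h1' : (fun s : ℝ => c / 2 * s ^ 2) =O[𝓝 0] fun s : ℝ => s ^ 2 :=
      (isBigO_refl _ _).const_mul_left _
    have := hB.isBigO.add h1'
    simpa using this
  -- θ⁴ = o(s⁴)
  have hθ4 : (fun s : ℝ => (θ s) ^ 4) =o[𝓝 0] fun s : ℝ => s ^ 4 := by
    have h8 : (fun s : ℝ => s ^ 8) =o[𝓝 0] fun s : ℝ => s ^ 4 :=
      isLittleO_pow_pow (by norm_num)
    have hO8 : (fun s : ℝ => (θ s) ^ 4) =O[𝓝 0] fun s : ℝ => s ^ 8 := by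
      have := hO2.pow 4
      simpa [← pow_mul] using this
    exact hO8.trans_isLittleO h8
  -- part 1
  have hsmall : ∀ᶠ s in 𝓝 (0:ℝ), |θ s| ≤ 1 := by
    have hct : ContinuousAt θ 0 := hθcont.continuousAt hnhds
    have := hct.tendsto
    rw [h0] at this
    have := this.eventually (eventually_abs_sub_lt 0 (by norm_num : (0:ℝ) < 1))
    filter_upwards [this] with s hs
    simpa using hs.le
  have hpart1 : (fun s : ℝ => Real.cos (θ s) - (1 - (θ s) ^ 2 / 2)) =o[𝓝 0]
      fun s : ℝ => s ^ 4 := by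
    refine (IsBigO.trans_isLittleO ?_ hθ4)
    rw [isBigO_iff]
    refine ⟨5 / 96, ?_⟩
    filter_upwards [hsmall] with s hs
    have := Real.cos_bound hs
    rw [Real.norm_eq_abs, Real.norm_eq_abs, abs_pow]
    calc |Real.cos (θ s) - (1 - θ s ^ 2 / 2)| ≤ |θ s| ^ 4 * (5 / 96) := this
      _ = 5 / 96 * |θ s| ^ 4 := by ring
  -- part 2
  have hpart2 : (fun s : ℝ => c ^ 2 / 8 * s ^ 4 - (θ s) ^ 2 / 2) =o[𝓝 0]
      fun s : ℝ => s ^ 4 := by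
    have hsum : (fun s : ℝ => θ s + c / 2 * s ^ 2) =O[𝓝 0] fun s : ℝ => s ^ 2 :=
      hO2.add ((isBigO_refl _ _).const_mul_left _)
    have hmul := (hB.mul_isBigO hsum).const_mul_left (-(1/2) : ℝ)
    refine hmul.congr (fun s => by ring) (fun s => by ring)
  -- combine
  have hg2 : (fun s : ℝ => Real.cos (θ s) - (1 - c ^ 2 / 8 * s ^ 4)) =o[𝓝 0]
      fun s : ℝ => s ^ 4 := by
    have := hpart1.add hpart2
    refine this.congr (fun s => by ring) (fun s => rfl)
  -- integrate
  have hI := integ_littleO hg2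
  refine IsLittleO.congr' (hI.congr_left fun s => rfl) ?_ EventuallyEq.rfl
  filter_upwards [hnhds] with t ht
  have hsubt := hsub t ht
  have hint1 : IntervalIntegrable (fun s => Real.cos (θ s)) MeasureTheory.volume 0 t :=
    ((Real.continuous_cos.comp_continuousOn hθcont).mono hsubt).intervalIntegrable
  have hint2 : IntervalIntegrable (fun s : ℝ => 1 - c ^ 2 / 8 * s ^ 4)
      MeasureTheory.volume 0 t := (Continuous.intervalIntegrable (by continuity) _ _)
  rw [intervalIntegral.integral_sub hint1 hint2]
  have hpoly : ∫ s in (0:ℝ)..t, (1 - c ^ 2 / 8 * s ^ 4) = t - c ^ 2 / 40 * t ^ 5 := by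
    have hi1 : IntervalIntegrable (fun _ : ℝ => (1:ℝ)) MeasureTheory.volume 0 t :=
      intervalIntegrable_const
    have hi2 : IntervalIntegrable (fun s : ℝ => c ^ 2 / 8 * s ^ 4)
        MeasureTheory.volume 0 t := (Continuous.intervalIntegrable (by continuity) _ _)
    rw [intervalIntegral.integral_sub hi1 hi2, intervalIntegral.integral_const_mul,
      integral_pow]
    simp; ring
  rw [hpoly]
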